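/- Let I be a finite interval of integers and let (a_n)_{n ∈ I} be complex numbers. Then for every integer R ≥ 1, |∑_{n∈I} a_n|² ≤ ((|I|−1+R)/R)·∑_{n∈I} |a_n|² + 2·((|I|−1+R)/R)·∑_{1≤r<R} (1 − r/R)·Re(∑_{n∈I, n+r∈I} a_n · conj(a_{n+r})). -/

import Mathlib

open Finset

lemma vdc_pair_split (R : ℕ) (h : ℕ → ℕ → ℝ) :
    ∑ r ∈ range R, ∑ s ∈ range R, h r s
      = ∑ r ∈ range R, h r r + ∑ s ∈ range R, ∑ r ∈ range s, (h r s + h s r) := by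
  induction R with
  | zero => simp
  | succ n ih =>
    rw [Finset.sum_range_succ (f := fun r => ∑ s ∈ range (n+1), h r s)]
    simp only [Finset.sum_range_succ]
    rw [Finset.sum_add_distrib, ih, Finset.sum_add_distrib]
    ring

lemma vdc_triangle (R : ℕ) (F : ℕ → ℕ → ℝ) :
    ∑ s ∈ range R, ∑ r ∈ range s, F r s
      = ∑ d ∈ Ico 1 R, ∑ r ∈ range (R - d), F r (r + d) := by
  rw [Finset.sum_sigma' (range R) (fun s => range s) (fun s r => F r s),
      Finset.sum_sigma' (Ico 1 R) (fun d => range (R - d)) (fun d r => F r (r + d))]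
  apply Finset.sum_nbij' (i := fun p => (⟨p.1 - p.2, p.2⟩ : Σ _ : ℕ, ℕ))
    (j := fun p => (⟨p.2 + p.1, p.2⟩ : Σ _ : ℕ, ℕ))
  · rintro ⟨s, r⟩ hp
    simp only [Finset.mem_sigma, Finset.mem_range, Finset.mem_Ico] at *
    omega
  · rintro ⟨d, r⟩ hp
    simp only [Finset.mem_sigma, Finset.mem_range, Finset.mem_Ico] at *
    omega
  · rintro ⟨s, r⟩ hp
    simp only [Finset.mem_sigma, Finset.mem_range] at hp
    simp only [Sigma.mk.inj_iff, heq_eq_eq]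
    exact ⟨by omega, trivial⟩
  · rintro ⟨d, r⟩ hp
    simp only [Finset.mem_sigma, Finset.mem_range, Finset.mem_Ico] at hp
    simp only [Sigma.mk.inj_iff, heq_eq_eq]
    exact ⟨by omega, trivial⟩
  · rintro ⟨s, r⟩ hp
    simp only [Finset.mem_sigma, Finset.mem_range] at hp
    show F r s = F r (r + (s - r))
    congr 1
    omega

lemma vdc_re_mul_conj_self (z : ℂ) : (z * (starRingEnd ℂ) z).re = ‖z‖ ^ 2 := by
  rw [Complex.mul_conj, Complex.ofReal_re, Complex.normSq_eq_norm_sq]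

lemma vdc_re_swap (z w : ℂ) : (w * (starRingEnd ℂ) z).re = (z * (starRingEnd ℂ) w).re := by
  rw [← Complex.conj_re (z * (starRingEnd ℂ) w), map_mul, Complex.conj_conj, mul_comm]

theorem stmt_5 (a b : ℤ) (f : ℤ → ℂ) (R : ℕ) (hR : 1 ≤ R) :
    ‖∑ n ∈ Finset.Icc a b, f n‖ ^ 2 ≤
      (((Finset.Icc a b).card - 1 + R : ℝ) / R) * ∑ n ∈ Finset.Icc a b, ‖f n‖ ^ 2 +
        2 * (((Finset.Icc a b).card - 1 + R : ℝ) / R) *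
          ∑ r ∈ Finset.Ico 1 R, (1 - (r : ℝ) / R) *
            (∑ n ∈ (Finset.Icc a b).filter (fun n => n + (r : ℤ) ∈ Finset.Icc a b),
              f n * (starRingEnd ℂ) (f (n + (r : ℤ)))).re := by
  rcases lt_or_ge b a with hba | hab
  · simp [Finset.Icc_eq_empty (not_le.2 hba)]
  set I := Finset.Icc a b with hI
  set g : ℤ → ℂ := fun n => if n ∈ I then f n else 0 with hgdef
  have hRZ : (1:ℤ) ≤ (R:ℤ) := by exact_mod_cast hR
  set p : ℤ := a - ((R:ℤ) - 1) with hp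
  set J := Finset.Icc p b with hJ
  have hshift : ∀ (c : ℤ) (h : ℤ → ℂ),
      ∑ m ∈ J, h (m + c) = ∑ n ∈ Finset.Icc (p + c) (b + c), h n := by
    intro c h
    rw [hJ, ← Finset.map_add_right_Icc, Finset.sum_map]
    simp [addRightEmbedding_apply]
  have hshiftR : ∀ (c : ℤ) (h : ℤ → ℝ),
      ∑ m ∈ J, h (m + c) = ∑ n ∈ Finset.Icc (p + c) (b + c), h n := by
    intro c h
    rw [hJ, ← Finset.map_add_right_Icc, Finset.sum_map]
    simp [addRightEmbedding_apply]
  have hsubset : ∀ r : ℕ, r < R → I ⊆ Finset.Icc (p + r) (b + r) := by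
    intro r hr
    have h1 : (r:ℤ) < (R:ℤ) := by exact_mod_cast hr
    have h2 : (0:ℤ) ≤ (r:ℤ) := Int.natCast_nonneg r
    rw [hI, hp]
    exact Finset.Icc_subset_Icc (by omega) (by omega)
  have hsum_g : ∀ r : ℕ, r < R → ∑ m ∈ J, g (m + (r:ℤ)) = ∑ n ∈ I, f n := by
    intro r hr
    rw [hshift]
    rw [← Finset.sum_subset (hsubset r hr) (fun x _ hx => by simp [hgdef, if_neg hx])]
    exact Finset.sum_congr rfl fun n hn => by simp [hgdef, hn]
  have hsum_g2 : ∀ r : ℕ, r < R → ∑ m ∈ J, ‖g (m + (r:ℤ))‖^2 = ∑ n ∈ I, ‖f n‖^2 := by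
    intro r hr
    rw [hshiftR (r:ℤ) (fun n => ‖g n‖^2)]
    rw [← Finset.sum_subset (hsubset r hr)
      (fun x _ hx => by simp [hgdef, if_neg hx])]
    exact Finset.sum_congr rfl fun n hn => by simp [hgdef, hn]
  have hcorr : ∀ (r d : ℕ), r < R →
      ∑ m ∈ J, g (m + (r:ℤ)) * (starRingEnd ℂ) (g (m + (r:ℤ) + (d:ℤ)))
        = ∑ n ∈ I.filter (fun n => n + (d:ℤ) ∈ I),
            f n * (starRingEnd ℂ) (f (n + (d:ℤ))) := by
    intro r d hr
    rw [hshift (r:ℤ) (fun n => g n * (starRingEnd ℂ) (g (n + (d:ℤ))))]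
    rw [← Finset.sum_subset
        ((Finset.filter_subset (fun n => n + (d:ℤ) ∈ I) I).trans (hsubset r hr))
        (fun x _ hx => by
          by_cases hx1 : x ∈ I
          · have hx2 : x + (d:ℤ) ∉ I := fun h => hx (Finset.mem_filter.2 ⟨hx1, h⟩)
            simp [hgdef, if_neg hx2]
          · simp [hgdef, if_neg hx1])]
    refine Finset.sum_congr rfl fun n hn => ?_
    rw [Finset.mem_filter] at hn
    simp [hgdef, hn.1, hn.2]
  set T : ℤ → ℂ := fun m => ∑ r ∈ range R, g (m + (r:ℤ)) with hT
  set S := ∑ n ∈ I, f n with hS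
  have hTsum : ∑ m ∈ J, T m = (R:ℂ) * S := by
    simp only [hT]
    rw [Finset.sum_comm]
    rw [Finset.sum_congr rfl fun r hr => hsum_g r (Finset.mem_range.1 hr)]
    rw [Finset.sum_const, Finset.card_range, nsmul_eq_mul]
  have hCS : (R:ℝ)^2 * ‖S‖^2 ≤ (J.card : ℝ) * ∑ m ∈ J, ‖T m‖^2 := by
    have h1 : (R:ℝ) * ‖S‖ = ‖∑ m ∈ J, T m‖ := by
      rw [hTsum, norm_mul, Complex.norm_natCast]
    have h3 : (∑ m ∈ J, ‖T m‖)^2 ≤ (J.card:ℝ) * ∑ m ∈ J, ‖T m‖^2 :=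
      sq_sum_le_card_mul_sum_sq
    calc (R:ℝ)^2 * ‖S‖^2 = ((R:ℝ) * ‖S‖)^2 := by ring
      _ = ‖∑ m ∈ J, T m‖^2 := by rw [h1]
      _ ≤ (∑ m ∈ J, ‖T m‖)^2 :=
        pow_le_pow_left₀ (norm_nonneg _) (norm_sum_le _ _) 2
      _ ≤ _ := h3
  set C : ℕ → ℝ := fun d => (∑ n ∈ I.filter (fun n => n + (d:ℤ) ∈ I),
      f n * (starRingEnd ℂ) (f (n + (d:ℤ)))).re with hC
  set Sig2 := ∑ n ∈ I, ‖f n‖^2 with hSig2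
  have hdiag : ∀ r : ℕ, r < R →
      ∑ m ∈ J, (g (m + (r:ℤ)) * (starRingEnd ℂ) (g (m + (r:ℤ)))).re = Sig2 := by
    intro r hr
    rw [Finset.sum_congr rfl fun m _ => vdc_re_mul_conj_self _]
    exact hsum_g2 r hr
  have hoff : ∀ r s : ℕ, r < s → s < R →
      ∑ m ∈ J, (g (m + (r:ℤ)) * (starRingEnd ℂ) (g (m + (s:ℤ)))).re = C (s - r) := by
    intro r s hrs hsR
    have hcast : (s:ℤ) = (r:ℤ) + ((s - r : ℕ) : ℤ) := by push_cast; omega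
    calc ∑ m ∈ J, (g (m + (r:ℤ)) * (starRingEnd ℂ) (g (m + (s:ℤ)))).re
        = (∑ m ∈ J, g (m + (r:ℤ)) * (starRingEnd ℂ) (g (m + (s:ℤ)))).re :=
          (Complex.re_sum _ _).symm
      _ = (∑ m ∈ J, g (m + (r:ℤ)) * (starRingEnd ℂ) (g (m + (r:ℤ) + ((s-r:ℕ):ℤ)))).re := by
          congr 1
          exact Finset.sum_congr rfl fun m _ => by rw [hcast, ← add_assoc]
      _ = C (s - r) := by
          simp only [hC]
          congr 1
          exact hcorr r (s - r) (hrs.trans hsR)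
  have hexp : ∑ m ∈ J, ‖T m‖^2
      = (R:ℝ) * Sig2 + ∑ d ∈ Ico 1 R, (2 * ((R:ℝ) - (d:ℝ))) * C d := by
    have e1 : ∀ m : ℤ, ‖T m‖^2
        = ∑ r ∈ range R, ∑ s ∈ range R,
            (g (m + (r:ℤ)) * (starRingEnd ℂ) (g (m + (s:ℤ)))).re := by
      intro m
      rw [← vdc_re_mul_conj_self (T m)]
      have e2 : T m * (starRingEnd ℂ) (T m)
          = ∑ r ∈ range R, ∑ s ∈ range R,
              g (m + (r:ℤ)) * (starRingEnd ℂ) (g (m + (s:ℤ))) := by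
        simp only [hT]
        rw [map_sum, Finset.sum_mul_sum]
      rw [e2, Complex.re_sum]
      exact Finset.sum_congr rfl fun r _ => Complex.re_sum _ _
    have e4 : ∑ m ∈ J, ‖T m‖^2
        = ∑ r ∈ range R, ∑ s ∈ range R, ∑ m ∈ J,
            (g (m + (r:ℤ)) * (starRingEnd ℂ) (g (m + (s:ℤ)))).re := by
      calc ∑ m ∈ J, ‖T m‖^2
          = ∑ m ∈ J, ∑ r ∈ range R, ∑ s ∈ range R,
              (g (m + (r:ℤ)) * (starRingEnd ℂ) (g (m + (s:ℤ)))).re :=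
            Finset.sum_congr rfl fun m _ => e1 m
        _ = ∑ r ∈ range R, ∑ m ∈ J, ∑ s ∈ range R,
              (g (m + (r:ℤ)) * (starRingEnd ℂ) (g (m + (s:ℤ)))).re :=
            Finset.sum_comm
        _ = ∑ r ∈ range R, ∑ s ∈ range R, ∑ m ∈ J,
              (g (m + (r:ℤ)) * (starRingEnd ℂ) (g (m + (s:ℤ)))).re :=
            Finset.sum_congr rfl fun r _ => Finset.sum_comm
    rw [e4]
    rw [vdc_pair_split R
      (fun r s => ∑ m ∈ J, (g (m + (r:ℤ)) * (starRingEnd ℂ) (g (m + (s:ℤ)))).re)]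
    congr 1
    · rw [Finset.sum_congr rfl fun r hr => hdiag r (Finset.mem_range.1 hr)]
      rw [Finset.sum_const, Finset.card_range, nsmul_eq_mul]
    · have e3 : ∀ s ∈ range R, ∀ r ∈ range s,
          (∑ m ∈ J, (g (m + (r:ℤ)) * (starRingEnd ℂ) (g (m + (s:ℤ)))).re)
            + (∑ m ∈ J, (g (m + (s:ℤ)) * (starRingEnd ℂ) (g (m + (r:ℤ)))).re)
          = 2 * C (s - r) := by
        intro s hs r hr
        rw [Finset.mem_range] at hs hr
        have hsw : ∑ m ∈ J, (g (m + (s:ℤ)) * (starRingEnd ℂ) (g (m + (r:ℤ)))).re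
            = ∑ m ∈ J, (g (m + (r:ℤ)) * (starRingEnd ℂ) (g (m + (s:ℤ)))).re :=
          Finset.sum_congr rfl fun m _ => vdc_re_swap (g (m + (r:ℤ))) (g (m + (s:ℤ)))
        rw [hsw, hoff r s hr hs]
        ring
      rw [Finset.sum_congr rfl fun s hs =>
        Finset.sum_congr rfl fun r hr => e3 s hs r hr]
      rw [vdc_triangle R (fun r s => 2 * C (s - r))]
      refine Finset.sum_congr rfl fun d hd => ?_
      rw [Finset.mem_Ico] at hd
      rw [Finset.sum_congr rfl (fun r _ => by rw [Nat.add_sub_cancel_left])]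
      rw [Finset.sum_const, Finset.card_range, nsmul_eq_mul]
      have : ((R - d : ℕ) : ℝ) = (R:ℝ) - (d:ℝ) := by
        have := hd.2; push_cast [Nat.cast_sub (le_of_lt hd.2)]; ring
      rw [this]; ring
  have hcard : (J.card : ℝ) = (I.card : ℝ) - 1 + R := by
    have h1 : (J.card : ℤ) = (I.card : ℤ) + (R:ℤ) - 1 := by
      rw [hJ, hI, Int.card_Icc, Int.card_Icc, hp]
      omega
    have h2 : ((J.card : ℤ) : ℝ) = (((I.card : ℤ) + (R:ℤ) - 1 : ℤ) : ℝ) := by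
      exact_mod_cast congrArg (fun z : ℤ => (z : ℝ)) h1
    push_cast at h2
    linarith
  have hRpos : (0:ℝ) < (R:ℝ) := by exact_mod_cast hR
  set W := ∑ r ∈ Ico 1 R, (1 - (r:ℝ)/(R:ℝ)) * C r with hW
  have hWrel : ∑ d ∈ Ico 1 R, (2*((R:ℝ) - (d:ℝ))) * C d = 2 * (R:ℝ) * W := by
    rw [hW, Finset.mul_sum]
    refine Finset.sum_congr rfl fun d _ => ?_
    field_simp
  have key : (R:ℝ)^2 * ‖S‖^2
      ≤ ((I.card:ℝ) - 1 + R) * ((R:ℝ) * Sig2 + 2*(R:ℝ)*W) := by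
    calc (R:ℝ)^2 * ‖S‖^2 ≤ (J.card : ℝ) * ∑ m ∈ J, ‖T m‖^2 := hCS
      _ = ((I.card:ℝ) - 1 + R) * ((R:ℝ) * Sig2 + 2*(R:ℝ)*W) := by
          rw [hcard, hexp, hWrel]
  have h2 : ‖S‖^2 ≤ (((I.card:ℝ) - 1 + R) * ((R:ℝ) * Sig2 + 2*(R:ℝ)*W))/(R:ℝ)^2 := by
    rw [le_div_iff₀ (by positivity)]
    calc ‖S‖^2 * (R:ℝ)^2 = (R:ℝ)^2 * ‖S‖^2 := by ring
      _ ≤ _ := key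
  refine h2.trans (le_of_eq ?_)
  have hR0 : (R:ℝ) ≠ 0 := ne_of_gt hRpos
  field_simp
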